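/- arXiv:1308.4219 — 2 statements merged into one kernel-verified Lean document; each statement's English description precedes it below -/
import Mathlib

section
/- There exists no real characteristic matrix on C^n(n+3)* for any n ≥ 6. -/
set_option maxHeartbeats 1000000

/-- The Gale interval `I_j = {j, j+1} ∩ {1,…,m}`. -/
def galeInterval (m j : ℕ) : Finset ℕ := ({j, j + 1} : Finset ℕ) ∩ Finset.Icc 1 m

/-- `S` is a maximal simplex of `K_{Cⁿ(m)*}` (dual Gale evenness): an `n`-subset of
`{1,…,m}` which is a disjoint union of Gale intervals. -/
def IsGaleFacet (n m : ℕ) (S : Finset ℕ) : Prop :=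
  S.card = n ∧ ∃ J : Finset ℕ, J ⊆ Finset.range (m + 1) ∧
    (∀ a ∈ J, ∀ b ∈ J, a ≠ b → Disjoint (galeInterval m a) (galeInterval m b)) ∧
    S = J.biUnion (galeInterval m)

/-- `M` (an `n×m` matrix over `ℤ/2`, columns indexed 1-based by `ℕ`) is a real
characteristic matrix on `Cⁿ(m)*`: every `n×n` minor on a maximal simplex is nonzero. -/
def IsRealCharMat (n m : ℕ) (M : Fin n → ℕ → ZMod 2) : Prop :=
  ∀ cols : Fin n → ℕ, Function.Injective cols →
    IsGaleFacet n m (Finset.image cols Finset.univ) →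
    Matrix.det (Matrix.of fun p q => M p (cols q)) ≠ 0

/-- Left endpoints of the Gale intervals tiling `[1,m] \ {a,b,c}`. -/
def tripP (m a b c j : ℕ) : Prop :=
  (j = 0 ∧ a % 2 = 0) ∨ (1 ≤ j ∧ j + 2 ≤ a ∧ j % 2 = a % 2) ∨
  (a < j ∧ j + 2 ≤ b ∧ j % 2 = b % 2) ∨ (b < j ∧ j + 2 ≤ c ∧ j % 2 = c % 2) ∨
  (c < j ∧ j < m ∧ j % 2 ≠ c % 2) ∨ (j = m ∧ (m + c) % 2 = 1)

instance tripP.instDec (m a b c : ℕ) : DecidablePred (tripP m a b c) := fun j => by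
  unfold tripP; exact inferInstance

lemma mem_galeInterval {m j x : ℕ} :
    x ∈ galeInterval m j ↔ (x = j ∨ x = j + 1) ∧ (1 ≤ x ∧ x ≤ m) := by
  simp [galeInterval, Finset.mem_Icc]

lemma tripP.cover {m a b c x : ℕ} (h1 : 1 ≤ a) (hab : a < b) (hbc : b < c) (hcm : c ≤ m)
    (hba : (b - a) % 2 = 1) (hcb : (c - b) % 2 = 1)
    (hx1 : 1 ≤ x) (hxm : x ≤ m) (hxa : x ≠ a) (hxb : x ≠ b) (hxc : x ≠ c) :
    ∃ j, tripP m a b c j ∧ (x = j ∨ x = j + 1) := by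
  unfold tripP
  rcases Nat.lt_or_ge x a with h | h
  · by_cases hp : x % 2 = a % 2
    · exact ⟨x, Or.inr (Or.inl (by omega)), Or.inl rfl⟩
    · rcases eq_or_ne x 1 with h1' | h1'
      · exact ⟨0, Or.inl (by omega), Or.inr (by omega)⟩
      · exact ⟨x - 1, Or.inr (Or.inl (by omega)), Or.inr (by omega)⟩
  · rcases Nat.lt_or_ge x b with h2 | h2
    · by_cases hp : x % 2 = b % 2
      · exact ⟨x, Or.inr (Or.inr (Or.inl (by omega))), Or.inl rfl⟩
      · exact ⟨x - 1, Or.inr (Or.inr (Or.inl (by omega))), Or.inr (by omega)⟩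
    · rcases Nat.lt_or_ge x c with h3 | h3
      · by_cases hp : x % 2 = c % 2
        · exact ⟨x, Or.inr (Or.inr (Or.inr (Or.inl (by omega)))), Or.inl rfl⟩
        · exact ⟨x - 1, Or.inr (Or.inr (Or.inr (Or.inl (by omega)))), Or.inr (by omega)⟩
      · by_cases hp : x % 2 = c % 2
        · exact ⟨x - 1, Or.inr (Or.inr (Or.inr (Or.inr (Or.inl (by omega))))), Or.inr (by omega)⟩
        · rcases Nat.lt_or_ge x m with h4 | h4
          · exact ⟨x, Or.inr (Or.inr (Or.inr (Or.inr (Or.inl (by omega))))), Or.inl rfl⟩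
          · exact ⟨m, Or.inr (Or.inr (Or.inr (Or.inr (Or.inr (by omega))))), Or.inl (by omega)⟩

lemma tripP.le {m a b c j : ℕ} (hab : a < b) (hbc : b < c) (hcm : c ≤ m)
    (hP : tripP m a b c j) : j ≤ m := by
  unfold tripP at hP; omega

lemma tripP.sep {m a b c j j' : ℕ} (h1 : 1 ≤ a) (hab : a < b) (hbc : b < c) (hcm : c ≤ m)
    (hba : (b - a) % 2 = 1) (hcb : (c - b) % 2 = 1)
    (hP : tripP m a b c j) (hP' : tripP m a b c j') (hne : j ≠ j') :
    j + 2 ≤ j' ∨ j' + 2 ≤ j := by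
  unfold tripP at hP hP'; omega

lemma tripP.avoid {m a b c j x : ℕ} (h1 : 1 ≤ a) (hab : a < b) (hbc : b < c) (hcm : c ≤ m)
    (hP : tripP m a b c j) (hx : x = j ∨ x = j + 1) (hx1 : 1 ≤ x) (hxm : x ≤ m) :
    x ≠ a ∧ x ≠ b ∧ x ≠ c := by
  unfold tripP at hP; omega

lemma galeFacet_of_triple {n m a b c : ℕ} (hnm : m = n + 3) (h1 : 1 ≤ a) (hab : a < b)
    (hbc : b < c) (hcm : c ≤ m) (hba : (b - a) % 2 = 1) (hcb : (c - b) % 2 = 1) :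
    IsGaleFacet n m (Finset.Icc 1 m \ {a, b, c}) := by
  constructor
  · rw [Finset.card_sdiff_of_subset (by
      intro x hx
      simp only [Finset.mem_insert, Finset.mem_singleton] at hx
      simp only [Finset.mem_Icc]; omega)]
    rw [Nat.card_Icc, Finset.card_eq_three.mpr ⟨a, b, c, by omega, by omega, by omega, rfl⟩]
    omega
  · refine ⟨(Finset.range (m + 1)).filter (tripP m a b c), Finset.filter_subset _ _, ?_, ?_⟩
    · intro j hj j' hj' hne
      have Pj := (Finset.mem_filter.mp hj).2
      have Pj' := (Finset.mem_filter.mp hj').2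
      have hsep := tripP.sep h1 hab hbc hcm hba hcb Pj Pj' hne
      rw [Finset.disjoint_left]
      intro x hx hx'
      rw [mem_galeInterval] at hx hx'
      omega
    · ext x
      simp only [Finset.mem_sdiff, Finset.mem_Icc, Finset.mem_insert, Finset.mem_singleton,
        Finset.mem_biUnion, Finset.mem_filter, Finset.mem_range]
      constructor
      · rintro ⟨⟨hx1, hxm⟩, hx⟩
        push_neg at hx
        obtain ⟨j, hPj, hxj⟩ := tripP.cover h1 hab hbc hcm hba hcb hx1 hxm hx.1 hx.2.1 hx.2.2
        exact ⟨j, ⟨by have := hPj.le hab hbc hcm; omega, hPj⟩,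
          mem_galeInterval.mpr ⟨hxj, hx1, hxm⟩⟩
      · rintro ⟨j, ⟨-, hPj⟩, hx⟩
        rw [mem_galeInterval] at hx
        have := tripP.avoid h1 hab hbc hcm hPj hx.1 hx.2.1 hx.2.2
        refine ⟨⟨hx.2.1, hx.2.2⟩, ?_⟩
        push_neg
        exact this

lemma exists_perp (v1 v2 : Fin 3 → ZMod 2) :
    ∃ u : Fin 3 → ZMod 2, u ≠ 0 ∧
      u 0 * v1 0 + u 1 * v1 1 + u 2 * v1 2 = 0 ∧
      u 0 * v2 0 + u 1 * v2 1 + u 2 * v2 2 = 0 := by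
  revert v1 v2; decide

/-- Key step: a kernel vector of the column matrix vanishing on a valid triple is zero. -/
lemma key_vanish {n : ℕ} (M : Fin n → ℕ → ZMod 2) (hM : IsRealCharMat n (n + 3) M)
    (w : Fin (n + 3) → ZMod 2)
    (hker : ∀ p : Fin n, ∑ j : Fin (n + 3), M p (j.val + 1) * w j = 0)
    (a b c : ℕ) (h1 : 1 ≤ a) (hab : a < b) (hbc : b < c) (hcm : c ≤ n + 3)
    (hba : (b - a) % 2 = 1) (hcb : (c - b) % 2 = 1)
    (hT : ∀ j : Fin (n + 3), (j.val + 1 = a ∨ j.val + 1 = b ∨ j.val + 1 = c) → w j = 0) :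
    w = 0 := by
  haveI : Fact (Nat.Prime 2) := ⟨Nat.prime_two⟩
  set W : ℕ → ZMod 2 := fun t => if h : t - 1 < n + 3 then w ⟨t - 1, h⟩ else 0 with hWdef
  have hW : ∀ j : Fin (n + 3), W (j.val + 1) = w j := by
    intro j
    have hb : j.val + 1 - 1 < n + 3 := by omega
    show (if h : j.val + 1 - 1 < n + 3 then w ⟨j.val + 1 - 1, h⟩ else 0) = w j
    rw [dif_pos hb]
    exact congrArg w (Fin.ext (by simp))
  set S : Finset ℕ := Finset.Icc 1 (n + 3) \ {a, b, c} with hS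
  have hfac : IsGaleFacet n (n + 3) S := galeFacet_of_triple rfl h1 hab hbc hcm hba hcb
  have hcard : S.card = n := hfac.1
  set e := S.orderIsoOfFin hcard with he
  set cols : Fin n → ℕ := fun q => (e q : ℕ) with hcols
  have hinj : Function.Injective cols := fun q q' h => e.injective (Subtype.ext h)
  have himg : Finset.image cols Finset.univ = S := by
    apply Finset.eq_of_subset_of_card_le
    · intro t ht
      simp only [Finset.mem_image] at ht
      obtain ⟨q, -, rfl⟩ := ht
      exact (e q).2
    · rw [Finset.card_image_of_injective _ hinj, Finset.card_univ, Fintype.card_fin, hcard]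
  have hdet := hM cols hinj (by rw [himg]; exact hfac)
  set N : Matrix (Fin n) (Fin n) (ZMod 2) := Matrix.of fun p q => M p (cols q) with hN
  set v : Fin n → ZMod 2 := fun q => W (cols q) with hv
  have hWT : ∀ t : ℕ, 1 ≤ t → (t = a ∨ t = b ∨ t = c) → W t = 0 := by
    intro t ht1 ht
    have htb : t - 1 < n + 3 := by omega
    rw [hWdef]
    simp only [dif_pos htb]
    exact hT ⟨t - 1, htb⟩ (by simp only []; omega)
  have hIcc : Finset.Icc 1 (n + 3) = (Finset.range (n + 3)).image (· + 1) := by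
    ext t
    simp only [Finset.mem_Icc, Finset.mem_image, Finset.mem_range]
    constructor
    · intro ht; exact ⟨t - 1, by omega, by omega⟩
    · rintro ⟨k, hk, rfl⟩; omega
  have hmv : N.mulVec v = 0 := by
    funext p
    have e1 : N.mulVec v p = ∑ q : Fin n, M p (cols q) * W (cols q) := by
      simp [Matrix.mulVec, dotProduct, hN, hv]
    have e2 : ∑ q : Fin n, M p (cols q) * W (cols q) = ∑ t ∈ S, M p t * W t := by
      rw [← himg, Finset.sum_image (fun x _ y _ h => hinj h)]
    have e3 : ∑ t ∈ S, M p t * W t = ∑ t ∈ Finset.Icc 1 (n + 3), M p t * W t := by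
      apply Finset.sum_subset Finset.sdiff_subset
      intro t ht hts
      have ht1 : 1 ≤ t := by
        simp only [Finset.mem_Icc] at ht; omega
      have htabc : t = a ∨ t = b ∨ t = c := by
        simp only [Finset.mem_sdiff, Finset.mem_insert, Finset.mem_singleton, not_and,
          not_not] at hts
        exact hts ht
      rw [hWT t ht1 htabc, mul_zero]
    have e4 : ∑ t ∈ Finset.Icc 1 (n + 3), M p t * W t
        = ∑ j : Fin (n + 3), M p (j.val + 1) * w j := by
      rw [hIcc, Finset.sum_image (by intro x _ y _ h; simp only at h; omega),
        ← Fin.sum_univ_eq_sum_range (fun k => M p (k + 1) * W (k + 1)) (n + 3)]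
      exact Finset.sum_congr rfl (fun j _ => by rw [hW j])
    rw [e1, e2, e3, e4, hker p]
    simp
  have hdet' : IsUnit N.det := isUnit_iff_ne_zero.mpr hdet
  have hv0 : v = 0 := by
    calc v = (N⁻¹ * N).mulVec v := by rw [Matrix.nonsing_inv_mul N hdet', Matrix.one_mulVec]
    _ = N⁻¹.mulVec (N.mulVec v) := (Matrix.mulVec_mulVec v N⁻¹ N).symm
    _ = 0 := by rw [hmv, Matrix.mulVec_zero]
  funext j
  by_cases hj : j.val + 1 = a ∨ j.val + 1 = b ∨ j.val + 1 = c
  · exact hT j hj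
  · have hjS : (j.val + 1) ∈ S := by
      rw [hS]
      simp only [Finset.mem_sdiff, Finset.mem_Icc, Finset.mem_insert, Finset.mem_singleton]
      push_neg at hj ⊢
      refine ⟨⟨by omega, by omega⟩, hj.1, hj.2.1, hj.2.2⟩
    rw [← himg] at hjS
    simp only [Finset.mem_image] at hjS
    obtain ⟨q, -, hq⟩ := hjS
    have h5 : v q = 0 := congrFun hv0 q
    rw [hv] at h5
    simp only at h5
    rw [hq] at h5
    rw [← hW j]
    exact h5

/-- There exists no real characteristic matrix on `Cⁿ(n+3)*` for `n ≥ 6`. -/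
theorem stmt_8 (n : ℕ) (hn : 6 ≤ n) :
    ¬ ∃ M : Fin n → ℕ → ZMod 2, IsRealCharMat n (n + 3) M := by
  rintro ⟨M, hM⟩
  haveI : Fact (Nat.Prime 2) := ⟨Nat.prime_two⟩
  set A : Matrix (Fin n) (Fin (n + 3)) (ZMod 2) := Matrix.of fun p j => M p (j.val + 1) with hA
  have hrank : 3 ≤ Module.finrank (ZMod 2) (LinearMap.ker A.mulVecLin) := by
    have h1 := LinearMap.finrank_range_add_finrank_ker A.mulVecLin
    have h2 : Module.finrank (ZMod 2) (Fin (n + 3) → ZMod 2) = n + 3 :=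
      Module.finrank_fin_fun (ZMod 2)
    have h3 : Module.finrank (ZMod 2) (LinearMap.range A.mulVecLin) ≤ n := by
      have h4 := Submodule.finrank_le (LinearMap.range A.mulVecLin)
      have h5 : Module.finrank (ZMod 2) (Fin n → ZMod 2) = n := Module.finrank_fin_fun (ZMod 2)
      omega
    omega
  obtain ⟨g, hg⟩ := exists_linearIndependent_of_le_finrank hrank
  have hk : ∀ s : Fin 3, ∀ p : Fin n,
      ∑ j : Fin (n + 3), M p (j.val + 1) * (g s).val j = 0 := by
    intro s p
    have h0 : A.mulVecLin (g s).val = 0 := (LinearMap.mem_ker).mp (g s).2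
    exact congrFun h0 p
  have hnz : ∀ u : Fin 3 → ZMod 2, u ≠ 0 → (∑ s : Fin 3, u s • (g s).val) ≠ 0 := by
    intro u hu h0
    apply hu
    have hcoe : ((∑ s : Fin 3, u s • g s : LinearMap.ker A.mulVecLin) :
        Fin (n + 3) → ZMod 2) = ∑ s : Fin 3, u s • ((g s : Fin (n + 3) → ZMod 2)) := by
      push_cast
      rfl
    have hsum : (∑ s : Fin 3, u s • g s) = 0 := Subtype.ext (by rw [hcoe, h0]; rfl)
    have hcz := Fintype.linearIndependent_iff.mp hg u hsum
    funext s
    exact hcz s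
  have h9 : (9 : ℕ) ≤ n + 3 := by omega
  -- the nine dual vectors
  set D : ℕ → (Fin 3 → ZMod 2) :=
    fun t s => (g s).val ⟨(t - 1) % (n + 3), Nat.mod_lt _ (by omega)⟩ with hD
  have contra : ∀ a b c : ℕ, 1 ≤ a → a < b → b < c → c ≤ 9 →
      (b - a) % 2 = 1 → (c - b) % 2 = 1 → ∀ v1 v2 : Fin 3 → ZMod 2,
      (∀ t : ℕ, (t = a ∨ t = b ∨ t = c) → D t = v1 ∨ D t = v2) → False := by
    intro a b c h1 hab hbc hc9 hba hcb v1 v2 hval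
    obtain ⟨u, hu0, hu1, hu2⟩ := exists_perp v1 v2
    set w : Fin (n + 3) → ZMod 2 := ∑ s : Fin 3, u s • (g s).val with hw
    have hw0 : w ≠ 0 := hnz u hu0
    apply hw0
    have hwj : ∀ j : Fin (n + 3), w j = ∑ s : Fin 3, u s * (g s).val j := by
      intro j
      rw [hw]
      simp [Finset.sum_apply]
    apply key_vanish M hM w ?_ a b c h1 hab hbc (by omega) hba hcb ?_
    · intro p
      calc ∑ j : Fin (n + 3), M p (j.val + 1) * w j
          = ∑ j : Fin (n + 3), ∑ s : Fin 3, u s * (M p (j.val + 1) * (g s).val j) := by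
            refine Finset.sum_congr rfl (fun j _ => ?_)
            rw [hwj j, Finset.mul_sum]
            exact Finset.sum_congr rfl (fun s _ => by ring)
        _ = ∑ s : Fin 3, u s * ∑ j : Fin (n + 3), M p (j.val + 1) * (g s).val j := by
            rw [Finset.sum_comm]
            exact Finset.sum_congr rfl (fun s _ => by rw [Finset.mul_sum])
        _ = 0 := by
            refine Finset.sum_eq_zero (fun s _ => ?_)
            rw [hk s p, mul_zero]
    · intro j hj
      have hjb : j.val + 1 ≤ 9 := by omega
      have hDj : ∀ s : Fin 3, D (j.val + 1) s = (g s).val j := by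
        intro s
        rw [hD]
        simp only []
        congr 1
        exact Fin.ext (by simp [Nat.mod_eq_of_lt (show j.val < n + 3 from j.isLt)])
      have hval' : D (j.val + 1) = v1 ∨ D (j.val + 1) = v2 := hval _ hj
      rw [hwj j, Fin.sum_univ_three]
      rcases hval' with h | h
      · rw [← hDj 0, ← hDj 1, ← hDj 2, h]
        exact hu1
      · rw [← hDj 0, ← hDj 1, ← hDj 2, h]
        exact hu2
  set C : Fin 9 → (Fin 3 → ZMod 2) := fun i => D (i.val + 1) with hC
  have hhelp : ∀ i j : Fin 9, i < j → C i ≠ C j := by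
    intro i j hij hCeq
    set p := i.val + 1 with hp
    set q := j.val + 1 with hq
    have hpq : p < q := by simp only [hp, hq]; omega
    have hq9 : q ≤ 9 := by omega
    have hp1 : 1 ≤ p := by omega
    by_cases hpar : (q - p) % 2 = 0
    · refine contra p (p + 1) q hp1 (by omega) (by omega) hq9 (by omega) (by omega)
        (D p) (D (p + 1)) ?_
      intro t ht
      rcases ht with rfl | rfl | rfl
      · exact Or.inl rfl
      · exact Or.inr rfl
      · exact Or.inl hCeq.symm
    · by_cases hq8 : q ≤ 8
      · refine contra p q (q + 1) hp1 hpq (by omega) (by omega) (by omega) (by omega)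
          (D p) (D (q + 1)) ?_
        intro t ht
        rcases ht with rfl | rfl | rfl
        · exact Or.inl rfl
        · exact Or.inl hCeq.symm
        · exact Or.inr rfl
      · have hq9' : q = 9 := by omega
        have hp2 : 2 ≤ p := by omega
        refine contra (p - 1) p 9 (by omega) (by omega) (by omega) (by omega) (by omega)
          (by omega) (D p) (D (p - 1)) ?_
        intro t ht
        rcases ht with rfl | rfl | rfl
        · exact Or.inr rfl
        · exact Or.inl rfl
        · rw [← hq9']
          exact Or.inl hCeq.symm
  have hCinj : Function.Injective C := by
    intro i j h
    by_contra hne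
    rcases Ne.lt_or_gt hne with h' | h'
    · exact hhelp i j h' h
    · exact hhelp j i h' h.symm
  have hcard := Fintype.card_le_of_injective C hCinj
  rw [Fintype.card_fin, Fintype.card_fun] at hcard
  simp [ZMod.card] at hcard
end

section
/- Any real characteristic matrix on C³(m)* with m > 5 is decomposable: there exists k with 2 < k < m-1 such that the minor on columns {1, k, m} is nonzero in ℤ/2. -/
/-- The 3×3 minor of a (3 × ℕ-indexed, 1-based columns) `ℤ/2`-matrix on columns `a,b,c`. -/
def minor3 (M : Fin 3 → ℕ → ZMod 2) (a b c : ℕ) : ZMod 2 :=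
  Matrix.det (Matrix.of fun (p q : Fin 3) => M p (![a, b, c] q))

/-- Explicit sign-free formula for a 3×3 determinant over `ℤ/2`, on column vectors. -/
def det3' (x y z : Fin 3 → ZMod 2) : ZMod 2 :=
  x 0 * y 1 * z 2 + x 0 * y 2 * z 1 + x 1 * y 0 * z 2
  + x 1 * y 2 * z 0 + x 2 * y 0 * z 1 + x 2 * y 1 * z 0

lemma minor3_eq_det3' (M : Fin 3 → ℕ → ZMod 2) (a b c : ℕ) :
    minor3 M a b c = det3' (fun p => M p a) (fun p => M p b) (fun p => M p c) := by
  simp only [minor3, det3', Matrix.det_fin_three, Matrix.of_apply, CharTwo.sub_eq_add]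
  norm_num
  simp only [Matrix.cons_val_two, Matrix.tail_cons, Matrix.head_cons]
  ring

set_option maxHeartbeats 2000000 in
lemma key3 (x u y z w : Fin 3 → ZMod 2) (h1 : det3' x y z ≠ 0) (h2 : det3' x u w ≠ 0)
    (h3 : det3' x y w = 0) (h4 : det3' x z w = 0) : False := by
  revert h1 h2 h3 h4
  revert x u y z w
  decide

/-- Any real characteristic matrix on `C³(m)*` with `m > 5` is decomposable: some minor
on columns `{1, k, m}` with `2 < k < m-1` is nonzero. -/
theorem stmt_10 (m : ℕ) (hm : 5 < m) (M : Fin 3 → ℕ → ZMod 2)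
    (h1 : ∀ i : ℕ, 2 ≤ i → i ≤ m - 1 → minor3 M 1 i (i + 1) ≠ 0)
    (h2 : ∀ i : ℕ, 1 ≤ i → i ≤ m - 2 → minor3 M i (i + 1) m ≠ 0) :
    ∃ k : ℕ, 2 < k ∧ k < m - 1 ∧ minor3 M 1 k m ≠ 0 := by
  by_contra h
  push_neg at h
  have e3 : minor3 M 1 3 m = 0 := h 3 (by norm_num) (by omega)
  have e4 : minor3 M 1 4 m = 0 := h 4 (by norm_num) (by omega)
  have a1 : minor3 M 1 3 4 ≠ 0 := by have := h1 3 (by norm_num) (by omega); simpa using this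
  have a2 : minor3 M 1 2 m ≠ 0 := by have := h2 1 (by norm_num) (by omega); simpa using this
  rw [minor3_eq_det3'] at e3 e4 a1 a2
  exact key3 (fun p => M p 1) (fun p => M p 2) (fun p => M p 3) (fun p => M p 4)
    (fun p => M p m) a1 a2 e3 e4
end
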